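/- Let S be a partial plane spread in PG(6,2) of the maximum size #S = 17. Then every hyperplane of V = F₂⁷ contains at least 1 and at most 3 blocks of S, and the spectrum of S is (1^7 2^112 3^8): exactly 7 hyperplanes contain exactly one block, exactly 112 hyperplanes contain exactly two blocks, and exactly 8 hyperplanes contain exactly three blocks. -/

import Mathlib

open Module

abbrev V2 : Type := Fin 7 → ZMod 2

/-- A partial plane spread in PG(6,2): a set of 3-dimensional subspaces of `V2 = F₂⁷`
(the blocks) any two distinct members of which intersect trivially. -/
def IsPPS (S : Set (Submodule (ZMod 2) V2)) : Prop :=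
  (∀ B ∈ S, finrank (ZMod 2) ↥B = 3) ∧
    ∀ B₁ ∈ S, ∀ B₂ ∈ S, B₁ ≠ B₂ → B₁ ⊓ B₂ = ⊥

/-- A point (1-dimensional subspace) of `V2` is a hole of `S` if it is contained
in no block of `S`. -/
def IsHole (S : Set (Submodule (ZMod 2) V2)) (P : Submodule (ZMod 2) V2) : Prop :=
  finrank (ZMod 2) ↥P = 1 ∧ ∀ B ∈ S, ¬ P ≤ B

/-- The number of holes of `S` contained in the subspace `X`. -/
noncomputable def holeCount (S : Set (Submodule (ZMod 2) V2))
    (X : Submodule (ZMod 2) V2) : ℕ :=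
  {P | IsHole S P ∧ P ≤ X}.ncard

/-- The span `⟨N⟩` of the set of holes of `S`. -/
noncomputable def holeSpan (S : Set (Submodule (ZMod 2) V2)) : Submodule (ZMod 2) V2 :=
  sSup {P | IsHole S P}

/-- The number of blocks of `S` contained in the subspace `H`. -/
noncomputable def blocksIn (S : Set (Submodule (ZMod 2) V2))
    (H : Submodule (ZMod 2) V2) : ℕ :=
  {B ∈ S | B ≤ H}.ncard

/-- `spec S i` = the number of hyperplanes of `V2` containing exactly `i` blocks of `S`. -/
noncomputable def spec (S : Set (Submodule (ZMod 2) V2)) (i : ℕ) : ℕ :=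
  {H : Submodule (ZMod 2) V2 | finrank (ZMod 2) ↥H = 6 ∧ blocksIn S H = i}.ncard



instance : Finite (Submodule (ZMod 2) V2) :=
  Finite.of_injective (fun X => (X : Set V2)) SetLike.coe_injective

instance : Finite (Module.Dual (ZMod 2) V2) :=
  Finite.of_injective (fun f => (f : V2 → ZMod 2)) DFunLike.coe_injective

lemma V2_finrank : finrank (ZMod 2) V2 = 7 := by
  simp [Module.finrank_pi]

lemma nz_ncard {M : Type*} [AddCommGroup M] [Module (ZMod 2) M] [Finite M]
    (X : Submodule (ZMod 2) M) :
    {v : M | v ∈ X ∧ v ≠ 0}.ncard = 2 ^ finrank (ZMod 2) X - 1 := by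
  have h1 : {v : M | v ∈ X ∧ v ≠ 0} = (X : Set M) \ {0} := by
    ext v; simp [and_comm]
  have h0 : ({0} : Set M) ⊆ (X : Set M) := by
    simp [Set.singleton_subset_iff]
  rw [h1, Set.ncard_diff h0 (Set.toFinite _), Set.ncard_singleton]
  have h2 : (X : Set M).ncard = Nat.card X := (Nat.card_coe_set_eq _).symm
  haveI : Fintype X := Fintype.ofFinite X
  rw [h2, Nat.card_eq_fintype_card, Module.card_eq_pow_finrank (K := ZMod 2), ZMod.card]

lemma hyp_ncard (W : Submodule (ZMod 2) V2) :
    {H : Submodule (ZMod 2) V2 | finrank (ZMod 2) ↥H = 6 ∧ W ≤ H}.ncard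
      = 2 ^ (7 - finrank (ZMod 2) ↥W) - 1 := by
  classical
  set A : Set (Module.Dual (ZMod 2) V2) := {f | f ∈ W.dualAnnihilator ∧ f ≠ 0} with hA
  have him : {H : Submodule (ZMod 2) V2 | finrank (ZMod 2) ↥H = 6 ∧ W ≤ H}
      = (fun f : Module.Dual (ZMod 2) V2 => LinearMap.ker f) '' A := by
    ext H
    simp only [Set.mem_setOf_eq, Set.mem_image, hA]
    constructor
    · rintro ⟨h6, hWH⟩
      have hq : finrank (ZMod 2) (V2 ⧸ H) = 1 := by
        have h := H.finrank_quotient_add_finrank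
        rw [V2_finrank, h6] at h; omega
      have e : (V2 ⧸ H) ≃ₗ[ZMod 2] ZMod 2 :=
        LinearEquiv.ofFinrankEq _ _ (by rw [hq, finrank_self])
      have hker : LinearMap.ker (e.toLinearMap ∘ₗ H.mkQ) = H := by
        rw [LinearMap.ker_comp, LinearEquiv.ker, Submodule.comap_bot, Submodule.ker_mkQ]
      refine ⟨e.toLinearMap ∘ₗ H.mkQ, ⟨?_, ?_⟩, hker⟩
      · rw [Submodule.mem_dualAnnihilator]
        intro w hw
        have hw2 : w ∈ H := hWH hw
        rw [← hker] at hw2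
        exact LinearMap.mem_ker.mp hw2
      · intro h0
        rw [h0, LinearMap.ker_zero] at hker
        rw [← hker, finrank_top, V2_finrank] at h6
        omega
    · rintro ⟨f, ⟨hfW, hf0⟩, rfl⟩
      refine ⟨?_, ?_⟩
      · have h := Module.Dual.finrank_ker_add_one_of_ne_zero hf0
        rw [V2_finrank] at h; omega
      · intro w hw
        rw [LinearMap.mem_ker]
        exact (Submodule.mem_dualAnnihilator f).mp hfW w hw
  have hinj : Set.InjOn (fun f : Module.Dual (ZMod 2) V2 => LinearMap.ker f) A := by
    rintro f ⟨_, hf⟩ g ⟨_, hg⟩ h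
    simp only at h
    have key : ∀ x y : ZMod 2, x ≠ 0 → y ≠ 0 → x = y := by decide
    refine LinearMap.ext fun v => ?_
    by_cases hv : v ∈ LinearMap.ker f
    · have hv' : v ∈ LinearMap.ker g := h ▸ hv
      rw [LinearMap.mem_ker] at hv hv'
      rw [hv, hv']
    · have hv' : v ∉ LinearMap.ker g := h ▸ hv
      rw [LinearMap.mem_ker] at hv hv'
      exact key _ _ hv hv'
  rw [him, Set.ncard_image_of_injOn hinj, hA, nz_ncard]
  have h1 : finrank (ZMod 2) ↥W.dualAnnihilator = finrank (ZMod 2) (V2 ⧸ W) :=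
    (Subspace.quotEquivAnnihilator W).finrank_eq.symm
  have h2 := W.finrank_quotient_add_finrank
  rw [V2_finrank] at h2
  have h3 : finrank (ZMod 2) ↥W.dualAnnihilator = 7 - finrank (ZMod 2) ↥W := by omega
  rw [h3]


theorem spectrum_of_max_pps (S : Set (Submodule (ZMod 2) V2)) (hS : IsPPS S)
    (h17 : S.ncard = 17) :
    (∀ H : Submodule (ZMod 2) V2, finrank (ZMod 2) ↥H = 6 →
      1 ≤ blocksIn S H ∧ blocksIn S H ≤ 3) ∧
    spec S 1 = 7 ∧ spec S 2 = 112 ∧ spec S 3 = 8 := by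
  classical
  obtain ⟨hdim, hdisj⟩ := hS
  haveI : Fintype (Submodule (ZMod 2) V2) := Fintype.ofFinite _
  have hSfin : S.Finite := Set.toFinite S
  set SF : Finset (Submodule (ZMod 2) V2) := hSfin.toFinset with hSF
  have hmemSF : ∀ B, B ∈ SF ↔ B ∈ S := fun B => hSfin.mem_toFinset
  have hcardSF : SF.card = 17 := by
    rw [← Set.ncard_eq_toFinset_card S hSfin] at *; exact h17
  -- nonzero vectors of a submodule, as a Finset
  set NZF : Submodule (ZMod 2) V2 → Finset V2 :=
    fun X => Finset.univ.filter (fun v => v ∈ X ∧ v ≠ 0) with hNZF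
  have cardNZF : ∀ X, (NZF X).card = 2 ^ finrank (ZMod 2) ↥X - 1 := by
    intro X
    have hcoe : ((NZF X : Finset V2) : Set V2) = {v : V2 | v ∈ X ∧ v ≠ 0} := by
      ext v; simp [hNZF]
    rw [← Set.ncard_coe_finset (NZF X), hcoe, nz_ncard]
  -- blocksIn as a Finset card
  have blocksIn_eq : ∀ H, blocksIn S H = (SF.filter (fun B => B ≤ H)).card := by
    intro H
    rw [blocksIn, ← Set.ncard_coe_finset]
    congr 1
    ext B
    simp [hmemSF B]
  -- hole vectors
  set holF : Submodule (ZMod 2) V2 → Finset V2 :=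
    fun X => (NZF X).filter (fun v => ∀ B ∈ S, v ∉ B) with hholF
  -- the key partition identity
  have hkey : ∀ X : Submodule (ZMod 2) V2,
      (∀ B ∈ SF, ¬ B ≤ X → finrank (ZMod 2) ↥(B ⊓ X) = 2) →
      2 ^ finrank (ZMod 2) ↥X - 1 =
        7 * (SF.filter (fun B => B ≤ X)).card
        + 3 * (17 - (SF.filter (fun B => B ≤ X)).card) + (holF X).card := by
    intro X hX
    have hsplit := Finset.card_filter_add_card_filter_not
      (s := NZF X) (p := fun v => ∃ B ∈ SF, v ∈ B)
    have h1 : (NZF X).filter (fun v => ∃ B ∈ SF, v ∈ B)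
        = SF.biUnion (fun B => NZF (B ⊓ X)) := by
      ext v
      simp only [Finset.mem_filter, Finset.mem_biUnion, hNZF, Finset.mem_univ,
        true_and, Submodule.mem_inf]
      tauto
    have h2 : (SF.biUnion fun B => NZF (B ⊓ X)).card
        = ∑ B ∈ SF, (NZF (B ⊓ X)).card := by
      refine Finset.card_biUnion ?_
      intro B₁ hB₁ B₂ hB₂ hne
      rw [Function.onFun, Finset.disjoint_left]
      intro v hv1 hv2
      simp only [hNZF, Finset.mem_filter, Finset.mem_univ, true_and,
        Submodule.mem_inf] at hv1 hv2
      have : v ∈ B₁ ⊓ B₂ := Submodule.mem_inf.mpr ⟨hv1.1.1, hv2.1.1⟩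
      rw [hdisj B₁ ((hmemSF B₁).mp hB₁) B₂ ((hmemSF B₂).mp hB₂) hne] at this
      exact hv1.2 this
    have h3 : ∑ B ∈ SF, (NZF (B ⊓ X)).card
        = ∑ B ∈ SF, (if B ≤ X then 7 else 3) := by
      refine Finset.sum_congr rfl fun B hB => ?_
      by_cases hBX : B ≤ X
      · rw [if_pos hBX, cardNZF, inf_eq_left.mpr hBX, hdim B ((hmemSF B).mp hB)]
        norm_num
      · rw [if_neg hBX, cardNZF, hX B hB hBX]
        norm_num
    have h4 : ∑ B ∈ SF, (if B ≤ X then (7:ℕ) else 3)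
        = 7 * (SF.filter (fun B => B ≤ X)).card
          + 3 * (17 - (SF.filter (fun B => B ≤ X)).card) := by
      rw [Finset.sum_ite, Finset.sum_const, Finset.sum_const, smul_eq_mul, smul_eq_mul]
      have := Finset.card_filter_add_card_filter_not
        (s := SF) (p := fun B => B ≤ X)
      rw [hcardSF] at this
      omega
    have h5 : (NZF X).filter (fun v => ¬ ∃ B ∈ SF, v ∈ B) = holF X := by
      ext v
      simp only [hholF, Finset.mem_filter]
      constructor
      · rintro ⟨hv, hv2⟩
        exact ⟨hv, fun B hB hvB => hv2 ⟨B, (hmemSF B).mpr hB, hvB⟩⟩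
      · rintro ⟨hv, hv2⟩
        exact ⟨hv, fun ⟨B, hB, hvB⟩ => hv2 B ((hmemSF B).mp hB) hvB⟩
    rw [← cardNZF X, ← hsplit, h1, h2, h3, h4, h5]
  -- total holes: 8
  have htop : (holF ⊤).card = 8 := by
    have h := hkey ⊤ (fun B _ hB => absurd le_top hB)
    rw [finrank_top, V2_finrank] at h
    rw [Finset.filter_true_of_mem (fun B _ => le_top), hcardSF] at h
    omega
  -- part 1
  have part1 : ∀ H : Submodule (ZMod 2) V2, finrank (ZMod 2) ↥H = 6 →
      1 ≤ blocksIn S H ∧ blocksIn S H ≤ 3 := by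
    intro H h6
    have hd2 : ∀ B ∈ SF, ¬ B ≤ H → finrank (ZMod 2) ↥(B ⊓ H) = 2 := by
      intro B hB hBH
      have hsum := Submodule.finrank_sup_add_finrank_inf_eq B H
      have hlt : H < B ⊔ H := lt_of_le_of_ne le_sup_right
        (fun hEq => hBH (hEq ▸ le_sup_left))
      have h7 : finrank (ZMod 2) ↥(B ⊔ H) = 7 := by
        have hle := Submodule.finrank_le (R := ZMod 2) (M := V2) (B ⊔ H)
        rw [V2_finrank] at hle
        have hgt := Submodule.finrank_lt_finrank_of_lt hlt
        omega
      rw [hdim B ((hmemSF B).mp hB), h6, h7] at hsum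
      omega
    have h := hkey H hd2
    rw [h6] at h
    have hhol : (holF H).card ≤ 8 := by
      rw [← htop]
      refine Finset.card_le_card ?_
      intro v hv
      simp only [hholF, hNZF, Finset.mem_filter, Finset.mem_univ, true_and] at hv ⊢
      exact ⟨⟨trivial, hv.1.2⟩, hv.2⟩
    have hble : (SF.filter (fun B => B ≤ H)).card ≤ 17 :=
      hcardSF ▸ Finset.card_filter_le _ _
    rw [blocksIn_eq]
    omega
  refine ⟨part1, ?_⟩
  -- hyperplane Finset
  set HF : Finset (Submodule (ZMod 2) V2) :=
    Finset.univ.filter (fun H => finrank (ZMod 2) ↥H = 6) with hHF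
  have hypcard : ∀ W : Submodule (ZMod 2) V2,
      (HF.filter (fun H => W ≤ H)).card = 2 ^ (7 - finrank (ZMod 2) ↥W) - 1 := by
    intro W
    have hcoe : ((HF.filter (fun H => W ≤ H) : Finset _) : Set _)
        = {H : Submodule (ZMod 2) V2 | finrank (ZMod 2) ↥H = 6 ∧ W ≤ H} := by
      ext H; simp [hHF, and_comm]
    rw [← Set.ncard_coe_finset, hcoe, hyp_ncard]
  have hHFcard : HF.card = 127 := by
    have := hypcard ⊥
    rw [Finset.filter_true_of_mem (fun H _ => bot_le), finrank_bot] at this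
    simpa using this
  -- first double count
  have sum1 : ∑ H ∈ HF, (SF.filter (fun B => B ≤ H)).card = 255 := by
    have : ∀ H, (SF.filter (fun B => B ≤ H)).card
        = ∑ B ∈ SF, (if B ≤ H then 1 else 0) := by
      intro H; rw [Finset.card_filter]
    simp_rw [this]
    rw [Finset.sum_comm]
    have hinner : ∀ B ∈ SF, (∑ H ∈ HF, if B ≤ H then (1:ℕ) else 0) = 15 := by
      intro B hB
      rw [← Finset.card_filter, hypcard B, hdim B ((hmemSF B).mp hB)]
      norm_num
    rw [Finset.sum_congr rfl hinner, Finset.sum_const, hcardSF, smul_eq_mul]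
  -- second double count
  have sum2 : ∑ H ∈ HF, (SF.filter (fun B => B ≤ H)).card
      * ((SF.filter (fun B => B ≤ H)).card - 1) = 272 := by
    have step1 : ∀ H, (SF.filter (fun B => B ≤ H)).card
        * ((SF.filter (fun B => B ≤ H)).card - 1)
        = ∑ B₁ ∈ SF, ∑ B₂ ∈ SF,
            (if B₁ ≠ B₂ ∧ B₁ ≤ H ∧ B₂ ≤ H then 1 else 0) := by
      intro H
      set fil := SF.filter (fun B => B ≤ H) with hfil
      have inner : ∀ B₁ ∈ fil, (∑ B₂ ∈ fil, if B₁ ≠ B₂ then (1:ℕ) else 0)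
          = fil.card - 1 := by
        intro B₁ hB₁
        rw [← Finset.card_filter]
        have : fil.filter (fun B₂ => B₁ ≠ B₂) = fil.erase B₁ := by
          ext B₂
          simp [Finset.mem_erase, ne_comm, and_comm]
        rw [this, Finset.card_erase_of_mem hB₁]
      have lhs : fil.card * (fil.card - 1)
          = ∑ B₁ ∈ fil, ∑ B₂ ∈ fil, (if B₁ ≠ B₂ then (1:ℕ) else 0) := by
        rw [Finset.sum_congr rfl inner, Finset.sum_const, smul_eq_mul]
      rw [lhs]
      rw [hfil, Finset.sum_filter]
      refine Finset.sum_congr rfl fun B₁ _ => ?_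
      rw [Finset.sum_filter]
      by_cases h1 : B₁ ≤ H
      · rw [if_pos h1]
        refine Finset.sum_congr rfl fun B₂ _ => ?_
        by_cases h2 : B₂ ≤ H <;> by_cases h3 : B₁ ≠ B₂ <;> simp [h1, h2, h3]
      · rw [if_neg h1]
        refine (Finset.sum_eq_zero fun B₂ _ => ?_).symm
        simp [h1]
    simp_rw [step1]
    rw [Finset.sum_comm]
    have swap2 : ∀ B₁ ∈ SF, (∑ H ∈ HF, ∑ B₂ ∈ SF,
        if B₁ ≠ B₂ ∧ B₁ ≤ H ∧ B₂ ≤ H then (1:ℕ) else 0) = 16 := by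
      intro B₁ hB₁
      rw [Finset.sum_comm]
      have hinner : ∀ B₂ ∈ SF, (∑ H ∈ HF,
          if B₁ ≠ B₂ ∧ B₁ ≤ H ∧ B₂ ≤ H then (1:ℕ) else 0)
          = if B₁ ≠ B₂ then 1 else 0 := by
        intro B₂ hB₂
        by_cases hne : B₁ = B₂
        · simp [hne]
        · have h6 : finrank (ZMod 2) ↥(B₁ ⊔ B₂) = 6 := by
            have hsum := Submodule.finrank_sup_add_finrank_inf_eq B₁ B₂
            rw [hdisj B₁ ((hmemSF B₁).mp hB₁) B₂ ((hmemSF B₂).mp hB₂) hne,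
              finrank_bot, hdim B₁ ((hmemSF B₁).mp hB₁),
              hdim B₂ ((hmemSF B₂).mp hB₂)] at hsum
            omega
          have hcond : ∀ H : Submodule (ZMod 2) V2,
              (B₁ ≠ B₂ ∧ B₁ ≤ H ∧ B₂ ≤ H) ↔ (B₁ ⊔ B₂ ≤ H) := by
            intro H
            rw [sup_le_iff]
            exact ⟨fun h => h.2, fun h => ⟨hne, h⟩⟩
          simp_rw [hcond]
          rw [← Finset.card_filter, hypcard (B₁ ⊔ B₂), h6, if_pos hne]
          norm_num
      rw [Finset.sum_congr rfl hinner]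
      have : SF.filter (fun B₂ => B₁ ≠ B₂) = SF.erase B₁ := by
        ext B₂; simp [Finset.mem_erase, ne_comm, and_comm]
      rw [← Finset.card_filter, this, Finset.card_erase_of_mem hB₁, hcardSF]
    rw [Finset.sum_congr rfl swap2, Finset.sum_const, hcardSF, smul_eq_mul]
  -- translate sums to blocksIn
  have sum1' : ∑ H ∈ HF, blocksIn S H = 255 := by
    rw [Finset.sum_congr rfl (fun H _ => blocksIn_eq H)]; exact sum1
  have sum2' : ∑ H ∈ HF, blocksIn S H * (blocksIn S H - 1) = 272 := by
    rw [Finset.sum_congr rfl (fun H _ => by rw [blocksIn_eq H])]; exact sum2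
  -- spectrum
  have hspec : ∀ i, spec S i = (HF.filter (fun H => blocksIn S H = i)).card := by
    intro i
    have hcoe : ((HF.filter (fun H => blocksIn S H = i) : Finset _) : Set _)
        = {H : Submodule (ZMod 2) V2 | finrank (ZMod 2) ↥H = 6 ∧ blocksIn S H = i} := by
      ext H; simp [hHF]
    rw [spec, ← hcoe, Set.ncard_coe_finset]
  set n1 := (HF.filter (fun H => blocksIn S H = 1)).card with hn1
  set n2 := (HF.filter (fun H => blocksIn S H = 2)).card with hn2
  set n3 := (HF.filter (fun H => blocksIn S H = 3)).card with hn3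
  have hbmem : ∀ H ∈ HF, 1 ≤ blocksIn S H ∧ blocksIn S H ≤ 3 := by
    intro H hH
    exact part1 H (by simpa [hHF] using hH)
  have e1 : n1 + n2 + n3 = 127 := by
    have : ∀ H ∈ HF, (1:ℕ) = (if blocksIn S H = 1 then 1 else 0)
        + (if blocksIn S H = 2 then 1 else 0) + (if blocksIn S H = 3 then 1 else 0) := by
      intro H hH
      obtain ⟨hl, hr⟩ := hbmem H hH
      interval_cases (blocksIn S H) <;> simp
    have h := Finset.sum_congr rfl this
    rw [Finset.sum_const, smul_eq_mul, mul_one, hHFcard] at h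
    rw [h, Finset.sum_add_distrib, Finset.sum_add_distrib,
      ← Finset.card_filter, ← Finset.card_filter, ← Finset.card_filter]
  have e2 : n1 + 2 * n2 + 3 * n3 = 255 := by
    have : ∀ H ∈ HF, blocksIn S H = (if blocksIn S H = 1 then 1 else 0)
        + (if blocksIn S H = 2 then 2 else 0) + (if blocksIn S H = 3 then 3 else 0) := by
      intro H hH
      obtain ⟨hl, hr⟩ := hbmem H hH
      interval_cases (blocksIn S H) <;> simp
    have h := Finset.sum_congr rfl this
    rw [sum1'] at h
    rw [Finset.sum_add_distrib, Finset.sum_add_distrib] at h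
    rw [← Finset.sum_filter, ← Finset.sum_filter, ← Finset.sum_filter] at h
    simp only [Finset.sum_const, smul_eq_mul, mul_one] at h
    rw [← hn1, ← hn2, ← hn3] at h
    omega
  have e3 : 2 * n2 + 6 * n3 = 272 := by
    have : ∀ H ∈ HF, blocksIn S H * (blocksIn S H - 1)
        = (if blocksIn S H = 2 then 2 else 0) + (if blocksIn S H = 3 then 6 else 0) := by
      intro H hH
      obtain ⟨hl, hr⟩ := hbmem H hH
      interval_cases (blocksIn S H) <;> simp
    have h := Finset.sum_congr rfl this
    rw [sum2'] at h
    rw [Finset.sum_add_distrib] at h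
    rw [← Finset.sum_filter, ← Finset.sum_filter] at h
    simp only [Finset.sum_const, smul_eq_mul] at h
    rw [← hn2, ← hn3] at h
    omega
  rw [hspec 1, hspec 2, hspec 3, ← hn1, ← hn2, ← hn3]
  refine ⟨?_, ?_, ?_⟩ <;> omega
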